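/- Fix μ₁ > 1 and μ₂ > 1. There exists a constant C = C(μ₁,μ₂) > 0 such that for every q ≥ 0 and every γ > 0, the set of ξ ∈ [−1/2,1/2]^ℤ for which there exists a finitely supported nonzero ℓ : ℤ → ℤ with |∑_{j∈ℤ} (j² + ξ_j ⟨j⟩^{−q}) ℓ_j| ≤ γ ∏_{n∈ℤ} (1 + |ℓ_n|^{μ₁} ⟨n⟩^{μ₂+q})^{−1} has measure at most C·γ with respect to the product over ℤ of the uniform probability measures on [−1/2,1/2]. -/

import Mathlib

open scoped BigOperators
open MeasureTheory

/-- `⟨j⟩ := max(|j|,1)` as a real number. -/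
noncomputable def jap (j : ℤ) : ℝ := max (|(j : ℝ)|) 1

open Set

noncomputable def U : Measure ℝ := volume.restrict (Set.Icc (-(1 / 2) : ℝ) (1 / 2))

instance : IsProbabilityMeasure U := by
  constructor
  rw [U, Measure.restrict_apply_univ, Real.volume_Icc]
  norm_num

lemma interval_vol (b c ε : ℝ) (hc : c ≠ 0) (hε : 0 ≤ ε) :
    volume {t : ℝ | |b + c * t| ≤ ε} ≤ ENNReal.ofReal (2 * ε / |c|) := by
  have hc' : 0 < |c| := abs_pos.2 hc
  have hsub : {t : ℝ | |b + c * t| ≤ ε} ⊆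
      Set.Icc (-b / c - ε / |c|) (-b / c + ε / |c|) := by
    intro t ht
    simp only [Set.mem_setOf_eq] at ht
    have h1 : |t - (-b / c)| ≤ ε / |c| := by
      have : |b + c * t| = |c| * |t - (-b / c)| := by
        rw [← abs_mul]
        congr 1
        field_simp
        ring
      rw [this] at ht
      rw [le_div_iff₀' hc']
      simpa [div_eq_inv_mul] using ht
    constructor
    · have := neg_le_of_abs_le h1; linarith [this]
    · have := le_of_abs_le h1; linarith [this]
  calc volume {t : ℝ | |b + c * t| ≤ ε} ≤ volume (Set.Icc (-b / c - ε / |c|) (-b / c + ε / |c|)) :=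
        measure_mono hsub
    _ = ENNReal.ofReal (2 * ε / |c|) := by
        rw [Real.volume_Icc]
        congr 1
        field_simp
        ring

open Classical in
lemma slab {ι : Type*} [Fintype ι] (a ε : ℝ) (c : ι → ℝ) (i₀ : ι) (hc : c i₀ ≠ 0) :
    Measure.pi (fun _ : ι => U) {x : ι → ℝ | |a + ∑ i, c i * x i| ≤ ε} ≤
      ENNReal.ofReal (2 * ε / |c i₀|) := by
  set p : ι → Prop := fun i => i ≠ i₀ with hp
  letI : Unique { i // ¬ p i } := by
    refine ⟨⟨⟨i₀, by simp [hp]⟩⟩, ?_⟩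
    rintro ⟨j, hj⟩
    simp only [hp, not_not] at hj
    subst hj; rfl
  have hg : Measurable (fun x : ι → ℝ => a + ∑ i, c i * x i) :=
    measurable_const.add (Finset.measurable_sum _ fun i _ =>
      (by fun_prop))
  have hS : MeasurableSet {x : ι → ℝ | |a + ∑ i, c i * x i| ≤ ε} := by
    have : {x : ι → ℝ | |a + ∑ i, c i * x i| ≤ ε} =
        (fun x : ι → ℝ => a + ∑ i, c i * x i) ⁻¹' (Set.Icc (-ε) ε) := by
      ext x; simp [abs_le]
    rw [this]
    exact hg measurableSet_Icc
  have hmp := measurePreserving_piEquivPiSubtypeProd (fun _ : ι => U) p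
  set e := MeasurableEquiv.piEquivPiSubtypeProd (fun _ : ι => ℝ) p with he
  have key := (hmp.symm e).measure_preimage hS.nullMeasurableSet
  rw [← key]
  set ν₁ := Measure.pi fun _ : Subtype p => U
  set ν₂ := Measure.pi fun _ : { i // ¬ p i } => U
  have hE : MeasurableSet (e.symm ⁻¹' {x : ι → ℝ | |a + ∑ i, c i * x i| ≤ ε}) :=
    e.symm.measurable hS
  rw [Measure.prod_apply hE]
  have inner : ∀ y : Subtype p → ℝ,
      ν₂ (Prod.mk y ⁻¹' (e.symm ⁻¹' {x : ι → ℝ | |a + ∑ i, c i * x i| ≤ ε})) ≤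
        ENNReal.ofReal (2 * ε / |c i₀|) := by
    intro y
    set b : ℝ := a + ∑ i : Subtype p, c i * y i with hb
    have hset : (Prod.mk y ⁻¹' (e.symm ⁻¹' {x : ι → ℝ | |a + ∑ i, c i * x i| ≤ ε})) =
        (MeasurableEquiv.funUnique { i // ¬ p i } ℝ) ⁻¹' {t : ℝ | |b + c i₀ * t| ≤ ε} := by
      ext z
      simp only [Set.mem_preimage, Set.mem_setOf_eq, MeasurableEquiv.funUnique_apply]
      have hsum : a + ∑ i, c i * (e.symm (y, z)) i = b + c i₀ * z default := by
        rw [← Fintype.sum_subtype_add_sum_subtype p (fun i => c i * (e.symm (y, z)) i)]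
        have h1 : ∀ i : Subtype p, (e.symm (y, z)) (i : ι) = y i := by
          intro i
          show (Equiv.piEquivPiSubtypeProd p (fun _ : ι => ℝ)).symm (y, z) (i : ι) = y i
          rw [Equiv.piEquivPiSubtypeProd_symm_apply, dif_pos i.2]
        have h2 : ∑ i : { i // ¬ p i }, c i * (e.symm (y, z)) i = c i₀ * z default := by
          rw [Fintype.sum_unique]
          have hd : ((default : { i // ¬ p i }) : ι) = i₀ := rfl
          have h3 : (e.symm (y, z)) ((default : { i // ¬ p i }) : ι) = z default := by
            show (Equiv.piEquivPiSubtypeProd p (fun _ : ι => ℝ)).symm (y, z)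
              ((default : { i // ¬ p i }) : ι) = z default
            rw [Equiv.piEquivPiSubtypeProd_symm_apply, dif_neg (default : { i // ¬ p i }).2]
          rw [hd] at h3 ⊢
          rw [h3]
        rw [h2, Finset.sum_congr rfl fun i _ => by rw [h1 i], hb]
        ring
      rw [hsum]
    rw [hset]
    show (Measure.pi fun _ : { i // ¬ p i } => U)
      ((MeasurableEquiv.funUnique { i // ¬ p i } ℝ) ⁻¹' {t : ℝ | |b + c i₀ * t| ≤ ε}) ≤ _
    have hW : MeasurableSet {t : ℝ | |b + c i₀ * t| ≤ ε} := by
      have : {t : ℝ | |b + c i₀ * t| ≤ ε} =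
          (fun t : ℝ => b + c i₀ * t) ⁻¹' (Set.Icc (-ε) ε) := by ext t; simp [abs_le]
      rw [this]
      exact (measurable_const.add (measurable_id.const_mul _)) measurableSet_Icc
    have h4 := (measurePreserving_funUnique U { i // ¬ p i }).measure_preimage
      hW.nullMeasurableSet
    have hft : (Unique.fintype : Fintype { i // ¬ p i }) = Subtype.fintype fun i => ¬ p i :=
      Subsingleton.elim _ _
    rw [hft] at h4
    refine le_trans (le_of_eq h4) ?_
    calc U {t : ℝ | |b + c i₀ * t| ≤ ε} ≤ volume {t : ℝ | |b + c i₀ * t| ≤ ε} :=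
          Measure.restrict_apply_le _ _
      _ ≤ ENNReal.ofReal (2 * ε / |c i₀|) := by
          rcases le_or_gt 0 ε with h | h
          · exact interval_vol b (c i₀) ε hc h
          · have : {t : ℝ | |b + c i₀ * t| ≤ ε} = ∅ := by
              ext t; simp only [Set.mem_setOf_eq, Set.mem_empty_iff_false, iff_false, not_le]
              exact lt_of_lt_of_le h (abs_nonneg _)
            simp [this]
  calc ∫⁻ y, ν₂ (Prod.mk y ⁻¹' (e.symm ⁻¹' {x : ι → ℝ | |a + ∑ i, c i * x i| ≤ ε})) ∂ν₁ ≤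
        ∫⁻ _, ENNReal.ofReal (2 * ε / |c i₀|) ∂ν₁ := lintegral_mono inner
    _ = ENNReal.ofReal (2 * ε / |c i₀|) := by
        rw [lintegral_const]
        simp

lemma one_le_jap (n : ℤ) : 1 ≤ jap n := le_max_right _ _

lemma jap_pos (n : ℤ) : 0 < jap n := lt_of_lt_of_le one_pos (one_le_jap n)

lemma jap_natCast (m : ℕ) : jap (m : ℤ) = max (m : ℝ) 1 := by
  simp [jap]

lemma jap_neg (n : ℤ) : jap (-n) = jap n := by simp [jap]

lemma summable_jap (r : ℝ) (hr : 1 < r) : Summable fun n : ℤ => jap n ^ (-r) := by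
  have hnat : Summable (fun m : ℕ => jap (m : ℤ) ^ (-r)) := by
    rw [← summable_nat_add_iff 1]
    have heq : (fun m : ℕ => jap ((m + 1 : ℕ) : ℤ) ^ (-r)) =
        fun m : ℕ => ((m + 1 : ℕ) : ℝ) ^ (-r) := by
      funext m
      congr 1
      rw [jap_natCast, max_eq_left (by exact_mod_cast Nat.one_le_iff_ne_zero.2 (Nat.succ_ne_zero m))]
    rw [heq]
    exact (summable_nat_add_iff 1).2 (Real.summable_nat_rpow.2 (by linarith))
  refine Summable.of_nat_of_neg hnat ?_
  simpa [jap_neg] using hnat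

lemma W_sum_le (μ₁ μ₂ : ℝ) (hμ₁ : 1 < μ₁) (hμ₂ : 1 < μ₂) (F : Finset (ℤ →₀ ℤ)) :
    ∑ ℓ ∈ F, ∏ n ∈ ℓ.support, (1 + |(ℓ n : ℝ)| ^ μ₁ * jap n ^ μ₂)⁻¹ ≤
      Real.exp ((∑' k : ℤ, jap k ^ (-μ₁)) * (∑' n : ℤ, jap n ^ (-μ₂))) := by
  classical
  set Z := ∑' k : ℤ, jap k ^ (-μ₁) with hZ
  set A := ∑' n : ℤ, jap n ^ (-μ₂) with hA
  have hZ0 : 0 ≤ Z := tsum_nonneg fun k => Real.rpow_nonneg (jap_pos k).le _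
  set s : Finset ℤ := F.sup Finsupp.support with hs
  set t : Finset ℤ := insert (0 : ℤ) (F.biUnion fun ℓ => ℓ.support.image ℓ) with ht
  set v : ℤ → ℤ → ℝ := fun n k =>
    if k = 0 then 1 else (1 + |(k : ℝ)| ^ μ₁ * jap n ^ μ₂)⁻¹ with hv
  have hv_nonneg : ∀ n k, 0 ≤ v n k := by
    intro n k
    rw [hv]
    dsimp only
    split
    · norm_num
    · exact inv_nonneg.2 (add_nonneg zero_le_one (mul_nonneg
        (Real.rpow_nonneg (abs_nonneg _) _) (Real.rpow_nonneg (jap_pos _).le _)))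
  have hsupp : ∀ ℓ ∈ F, ℓ.support ⊆ s := fun ℓ hℓ => Finset.le_sup hℓ
  have hW : ∀ ℓ ∈ F, ∏ n ∈ ℓ.support, (1 + |(ℓ n : ℝ)| ^ μ₁ * jap n ^ μ₂)⁻¹ =
      ∏ i : s, v (i : ℤ) (ℓ i) := by
    intro ℓ hℓ
    rw [Finset.prod_coe_sort s (fun n => v n (ℓ n))]
    rw [← Finset.prod_subset (hsupp ℓ hℓ) (fun n _ hn => by
      simp [hv, Finsupp.notMem_support_iff.1 hn])]
    exact Finset.prod_congr rfl fun n hn => by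
      simp [hv, Finsupp.mem_support_iff.1 hn]
  set φ : (ℤ →₀ ℤ) → (s → ℤ) := fun ℓ i => ℓ i with hφ
  have himg : F.image φ ⊆ Fintype.piFinset (fun _ : s => t) := by
    intro p hp
    rcases Finset.mem_image.1 hp with ⟨ℓ, hℓ, rfl⟩
    rw [Fintype.mem_piFinset]
    intro i
    by_cases h0 : ℓ i = 0
    · rw [hφ]; dsimp only; rw [h0]; exact Finset.mem_insert_self _ _
    · rw [ht]
      refine Finset.mem_insert_of_mem (Finset.mem_biUnion.2 ⟨ℓ, hℓ, ?_⟩)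
      exact Finset.mem_image_of_mem ℓ (Finsupp.mem_support_iff.2 h0)
  have hinj : ∀ x ∈ F, ∀ y ∈ F, φ x = φ y → x = y := by
    intro x hx y hy hxy
    ext i
    by_cases hi : i ∈ s
    · exact congrFun hxy ⟨i, hi⟩
    · rw [Finsupp.notMem_support_iff.1 fun h => hi (hsupp x hx h),
        Finsupp.notMem_support_iff.1 fun h => hi (hsupp y hy h)]
  calc ∑ ℓ ∈ F, ∏ n ∈ ℓ.support, (1 + |(ℓ n : ℝ)| ^ μ₁ * jap n ^ μ₂)⁻¹
      = ∑ ℓ ∈ F, ∏ i : s, v (i : ℤ) (φ ℓ i) := Finset.sum_congr rfl hW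
    _ = ∑ p ∈ F.image φ, ∏ i : s, v (i : ℤ) (p i) := (Finset.sum_image
        (g := φ) (f := fun p : s → ℤ => ∏ i : s, v (i : ℤ) (p i)) hinj).symm
    _ ≤ ∑ p ∈ Fintype.piFinset (fun _ : s => t), ∏ i : s, v (i : ℤ) (p i) :=
        Finset.sum_le_sum_of_subset_of_nonneg himg fun p _ _ =>
          Finset.prod_nonneg fun i _ => hv_nonneg _ _
    _ = ∏ i : s, ∑ k ∈ t, v (i : ℤ) k := (Finset.prod_univ_sum _ _).symm
    _ ≤ ∏ i : s, Real.exp (Z * jap (i : ℤ) ^ (-μ₂)) := by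
        refine Finset.prod_le_prod (fun i _ => Finset.sum_nonneg fun k _ => hv_nonneg _ _) ?_
        intro i _
        have h0t : (0 : ℤ) ∈ t := Finset.mem_insert_self _ _
        have hsplit : ∑ k ∈ t, v (i : ℤ) k = 1 + ∑ k ∈ t.erase 0, v (i : ℤ) k := by
          rw [add_comm, ← Finset.sum_erase_add t _ h0t]
          simp [hv]
        have hterm : ∀ k ∈ t.erase 0, v (i : ℤ) k ≤ jap k ^ (-μ₁) * jap (i : ℤ) ^ (-μ₂) := by
          intro k hk
          have hk0 : k ≠ 0 := Finset.ne_of_mem_erase hk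
          have hk1 : (1 : ℝ) ≤ |(k : ℝ)| := by
            rw [← Int.cast_abs]
            exact_mod_cast Int.one_le_abs hk0
          have hjk : jap k = |(k : ℝ)| := max_eq_left hk1
          rw [hv]
          dsimp only
          rw [if_neg hk0, Real.rpow_neg (jap_pos k).le, Real.rpow_neg (jap_pos _).le,
            ← mul_inv, hjk]
          refine inv_anti₀ (mul_pos (Real.rpow_pos_of_pos
            (lt_of_lt_of_le one_pos hk1) μ₁) (Real.rpow_pos_of_pos (jap_pos _) μ₂)) ?_
          nlinarith [mul_pos (Real.rpow_pos_of_pos (lt_of_lt_of_le one_pos hk1) μ₁)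
            (Real.rpow_pos_of_pos (jap_pos (i : ℤ)) μ₂)]
        have hsum2 : ∑ k ∈ t.erase 0, v (i : ℤ) k ≤ Z * jap (i : ℤ) ^ (-μ₂) := by
          calc ∑ k ∈ t.erase 0, v (i : ℤ) k
              ≤ ∑ k ∈ t.erase 0, jap k ^ (-μ₁) * jap (i : ℤ) ^ (-μ₂) :=
                Finset.sum_le_sum hterm
            _ = (∑ k ∈ t.erase 0, jap k ^ (-μ₁)) * jap (i : ℤ) ^ (-μ₂) := by
                rw [Finset.sum_mul]
            _ ≤ Z * jap (i : ℤ) ^ (-μ₂) := by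
                refine mul_le_mul_of_nonneg_right ?_ (Real.rpow_nonneg (jap_pos _).le _)
                exact (summable_jap μ₁ hμ₁).sum_le_tsum _ (fun k _ => Real.rpow_nonneg (jap_pos k).le _)
        calc ∑ k ∈ t, v (i : ℤ) k = 1 + ∑ k ∈ t.erase 0, v (i : ℤ) k := hsplit
          _ ≤ 1 + Z * jap (i : ℤ) ^ (-μ₂) := by linarith
          _ ≤ Real.exp (Z * jap (i : ℤ) ^ (-μ₂)) := by
              have := Real.add_one_le_exp (Z * jap (i : ℤ) ^ (-μ₂))
              linarith
    _ = Real.exp (∑ i : s, Z * jap (i : ℤ) ^ (-μ₂)) := (Real.exp_sum _ _).symm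
    _ ≤ Real.exp (Z * A) := by
        rw [Real.exp_le_exp]
        have : ∑ i : s, Z * jap (i : ℤ) ^ (-μ₂) = Z * ∑ n ∈ s, jap n ^ (-μ₂) := by
          rw [← Finset.mul_sum, Finset.sum_coe_sort s (fun n => jap n ^ (-μ₂))]
        rw [this]
        refine mul_le_mul_of_nonneg_left ?_ hZ0
        exact (summable_jap μ₂ hμ₂).sum_le_tsum s (fun k _ => Real.rpow_nonneg (jap_pos k).le _)

lemma tsum_W_le (μ₁ μ₂ : ℝ) (hμ₁ : 1 < μ₁) (hμ₂ : 1 < μ₂) :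
    ∑' ℓ : ℤ →₀ ℤ, ENNReal.ofReal (∏ n ∈ ℓ.support, (1 + |(ℓ n : ℝ)| ^ μ₁ * jap n ^ μ₂)⁻¹) ≤
      ENNReal.ofReal
        (Real.exp ((∑' k : ℤ, jap k ^ (-μ₁)) * (∑' n : ℤ, jap n ^ (-μ₂)))) := by
  rw [ENNReal.tsum_eq_iSup_sum]
  refine iSup_le fun F => ?_
  rw [← ENNReal.ofReal_sum_of_nonneg fun ℓ _ => Finset.prod_nonneg fun n _ =>
    inv_nonneg.2 (add_nonneg zero_le_one (mul_nonneg
      (Real.rpow_nonneg (abs_nonneg _) _) (Real.rpow_nonneg (jap_pos _).le _)))]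
  exact ENNReal.ofReal_le_ofReal (W_sum_le μ₁ μ₂ hμ₁ hμ₂ F)

lemma measure_S_le (μ₁ μ₂ q γ : ℝ) (hμ₁ : 1 < μ₁) (hμ₂ : 1 < μ₂) (hq : 0 ≤ q) (hγ : 0 < γ)
    (μ : Measure (ℤ → ℝ))
    (hmarg : ∀ s : Finset ℤ,
      μ.map (fun ξ (i : s) => ξ (i : ℤ)) =
        Measure.pi fun _ : s => volume.restrict (Set.Icc (-(1 / 2) : ℝ) (1 / 2)))
    (ℓ : ℤ →₀ ℤ) (hℓ : ℓ ≠ 0) :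
    μ {ξ : ℤ → ℝ |
        |∑ j ∈ ℓ.support, (((j : ℝ) ^ 2 + ξ j * jap j ^ (-q)) * (ℓ j : ℝ))| ≤
          γ * ∏ n ∈ ℓ.support, (1 + |(ℓ n : ℝ)| ^ μ₁ * jap n ^ (μ₂ + q))⁻¹} ≤
      ENNReal.ofReal
        (4 * γ * ∏ n ∈ ℓ.support, (1 + |(ℓ n : ℝ)| ^ μ₁ * jap n ^ μ₂)⁻¹) := by
  classical
  obtain ⟨j₀, hj₀⟩ := Finsupp.support_nonempty_iff.2 hℓ
  set s : Finset ℤ := ℓ.support with hs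
  set a : ℝ := ∑ j ∈ s, (j : ℝ) ^ 2 * (ℓ j : ℝ) with ha
  set c : s → ℝ := fun i => jap (i : ℤ) ^ (-q) * (ℓ (i : ℤ) : ℝ) with hc
  set ε : ℝ := γ * ∏ n ∈ s, (1 + |(ℓ n : ℝ)| ^ μ₁ * jap n ^ (μ₂ + q))⁻¹ with hε
  have hsum : ∀ ξ : ℤ → ℝ,
      ∑ j ∈ s, (((j : ℝ) ^ 2 + ξ j * jap j ^ (-q)) * (ℓ j : ℝ)) =
        a + ∑ i : s, c i * ξ (i : ℤ) := by
    intro ξ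
    have h1 : ∑ i : s, c i * ξ (i : ℤ) =
        ∑ j ∈ s, (jap j ^ (-q) * (ℓ j : ℝ)) * ξ j :=
      Finset.sum_coe_sort s (fun j => (jap j ^ (-q) * (ℓ j : ℝ)) * ξ j)
    rw [h1, ha, ← Finset.sum_add_distrib]
    exact Finset.sum_congr rfl fun j _ => by ring
  have hset : {ξ : ℤ → ℝ |
      |∑ j ∈ s, (((j : ℝ) ^ 2 + ξ j * jap j ^ (-q)) * (ℓ j : ℝ))| ≤ ε} =
      (fun ξ (i : s) => ξ (i : ℤ)) ⁻¹' {x : s → ℝ | |a + ∑ i, c i * x i| ≤ ε} := by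
    ext ξ
    simp only [Set.mem_setOf_eq, Set.mem_preimage]
    rw [hsum ξ]
  have hf : Measurable (fun ξ : ℤ → ℝ => fun i : s => ξ (i : ℤ)) :=
    measurable_pi_lambda _ fun i => measurable_pi_apply _
  have hT : MeasurableSet {x : s → ℝ | |a + ∑ i, c i * x i| ≤ ε} := by
    have : {x : s → ℝ | |a + ∑ i, c i * x i| ≤ ε} =
        (fun x : s → ℝ => a + ∑ i, c i * x i) ⁻¹' (Set.Icc (-ε) ε) := by
      ext x; simp [abs_le]
    rw [this]
    exact (measurable_const.add (Finset.measurable_sum _ fun i _ =>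
      (by fun_prop))) measurableSet_Icc
  rw [hset, ← Measure.map_apply hf hT, hmarg s]
  have hℓj₀ : (ℓ j₀ : ℝ) ≠ 0 := Int.cast_ne_zero.2 (Finsupp.mem_support_iff.1 hj₀)
  have hc0 : c ⟨j₀, hj₀⟩ ≠ 0 :=
    mul_ne_zero (ne_of_gt (Real.rpow_pos_of_pos (jap_pos _) _)) hℓj₀
  refine le_trans (slab a ε c ⟨j₀, hj₀⟩ hc0) (ENNReal.ofReal_le_ofReal ?_)
  -- real-number estimate
  have hm1 : (1 : ℝ) ≤ |(ℓ j₀ : ℝ)| := by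
    rw [← Int.cast_abs]
    exact_mod_cast Int.one_le_abs (Finsupp.mem_support_iff.1 hj₀)
  set m : ℝ := |(ℓ j₀ : ℝ)| with hm
  set J : ℝ := jap j₀ with hJ
  have hJ1 : 1 ≤ J := one_le_jap j₀
  have hJq1 : 1 ≤ J ^ q := Real.one_le_rpow hJ1 hq
  have hcabs : |c ⟨j₀, hj₀⟩| = (J ^ q)⁻¹ * m := by
    rw [hc]
    dsimp only
    rw [abs_mul, abs_of_pos (Real.rpow_pos_of_pos (jap_pos _) _),
      Real.rpow_neg (jap_pos _).le]
  have hJqpos : (0 : ℝ) < J ^ q := lt_of_lt_of_le one_pos hJq1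
  set X : ℝ := |(ℓ j₀ : ℝ)| ^ μ₁ * J ^ μ₂ with hX
  have hX1 : 1 ≤ X :=
    one_le_mul_of_one_le_of_one_le (Real.one_le_rpow hm1 (by linarith))
      (Real.one_le_rpow hJ1 (by linarith))
  have hPw : ∀ n ∈ s, (1 + |(ℓ n : ℝ)| ^ μ₁ * jap n ^ (μ₂ + q))⁻¹ ≤
      (1 + |(ℓ n : ℝ)| ^ μ₁ * jap n ^ μ₂)⁻¹ := by
    intro n _
    have h1 : jap n ^ μ₂ ≤ jap n ^ (μ₂ + q) :=
      Real.rpow_le_rpow_of_exponent_le (one_le_jap n) (by linarith)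
    have h2 : (0 : ℝ) < 1 + |(ℓ n : ℝ)| ^ μ₁ * jap n ^ μ₂ := by
      have := mul_nonneg (Real.rpow_nonneg (abs_nonneg ((ℓ n : ℝ))) μ₁)
        (Real.rpow_nonneg (jap_pos n).le μ₂)
      linarith
    refine inv_anti₀ h2 ?_
    have := mul_le_mul_of_nonneg_left h1 (Real.rpow_nonneg (abs_nonneg ((ℓ n : ℝ))) μ₁)
    linarith
  have hw_nonneg : ∀ n : ℤ, (0 : ℝ) ≤ (1 + |(ℓ n : ℝ)| ^ μ₁ * jap n ^ μ₂)⁻¹ := fun n =>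
    inv_nonneg.2 (add_nonneg zero_le_one (mul_nonneg
      (Real.rpow_nonneg (abs_nonneg _) _) (Real.rpow_nonneg (jap_pos _).le _)))
  have hP_nonneg : ∀ n : ℤ, (0 : ℝ) ≤ (1 + |(ℓ n : ℝ)| ^ μ₁ * jap n ^ (μ₂ + q))⁻¹ := fun n =>
    inv_nonneg.2 (add_nonneg zero_le_one (mul_nonneg
      (Real.rpow_nonneg (abs_nonneg _) _) (Real.rpow_nonneg (jap_pos _).le _)))
  -- key pointwise estimate at j₀
  have hkey : J ^ q * (1 + X * J ^ q)⁻¹ ≤ 2 * m * (1 + X)⁻¹ := by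
    have h1 : (0 : ℝ) < 1 + X * J ^ q := by nlinarith
    have h2 : (0 : ℝ) < 1 + X := by nlinarith
    rw [← div_eq_mul_inv, ← div_eq_mul_inv, div_le_div_iff₀ h1 h2]
    nlinarith [mul_nonneg (sub_nonneg.2 hX1) hJqpos.le,
      mul_nonneg (mul_nonneg (sub_nonneg.2 hm1) (le_trans zero_le_one hX1)) hJqpos.le]
  have hPj₀ : (1 + |(ℓ j₀ : ℝ)| ^ μ₁ * jap j₀ ^ (μ₂ + q))⁻¹ = (1 + X * J ^ q)⁻¹ := by
    rw [hX, Real.rpow_add (jap_pos j₀), mul_assoc]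
  have hij : (⟨j₀, hj₀⟩ : s) = ⟨j₀, hj₀⟩ := rfl
  -- final chain
  rw [hcabs, hε]
  rw [div_eq_mul_inv, mul_inv, inv_inv]
  have hε_nonneg : 0 ≤ ∏ n ∈ s, (1 + |(ℓ n : ℝ)| ^ μ₁ * jap n ^ (μ₂ + q))⁻¹ :=
    Finset.prod_nonneg fun n _ => hP_nonneg n
  -- reduce to : J^q * ∏ P ≤ 2 * m * ∏ w
  have hmain : J ^ q * ∏ n ∈ s, (1 + |(ℓ n : ℝ)| ^ μ₁ * jap n ^ (μ₂ + q))⁻¹ ≤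
      2 * m * ∏ n ∈ s, (1 + |(ℓ n : ℝ)| ^ μ₁ * jap n ^ μ₂)⁻¹ := by
    rw [← Finset.mul_prod_erase s _ hj₀, ← Finset.mul_prod_erase s
      (fun n => (1 + |(ℓ n : ℝ)| ^ μ₁ * jap n ^ μ₂)⁻¹) hj₀]
    have h2 : ∏ n ∈ s.erase j₀, (1 + |(ℓ n : ℝ)| ^ μ₁ * jap n ^ (μ₂ + q))⁻¹ ≤
        ∏ n ∈ s.erase j₀, (1 + |(ℓ n : ℝ)| ^ μ₁ * jap n ^ μ₂)⁻¹ :=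
      Finset.prod_le_prod (fun n _ => hP_nonneg n)
        (fun n hn => hPw n (Finset.mem_of_mem_erase hn))
    calc J ^ q * ((1 + |(ℓ j₀ : ℝ)| ^ μ₁ * jap j₀ ^ (μ₂ + q))⁻¹ *
          ∏ n ∈ s.erase j₀, (1 + |(ℓ n : ℝ)| ^ μ₁ * jap n ^ (μ₂ + q))⁻¹)
        = (J ^ q * (1 + X * J ^ q)⁻¹) *
          ∏ n ∈ s.erase j₀, (1 + |(ℓ n : ℝ)| ^ μ₁ * jap n ^ (μ₂ + q))⁻¹ := by
          rw [hPj₀]; ring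
      _ ≤ (2 * m * (1 + X)⁻¹) * ∏ n ∈ s.erase j₀, (1 + |(ℓ n : ℝ)| ^ μ₁ * jap n ^ μ₂)⁻¹ := by
          refine mul_le_mul hkey h2 (Finset.prod_nonneg fun n _ => hP_nonneg n) ?_
          positivity
      _ = 2 * m * ((1 + |(ℓ j₀ : ℝ)| ^ μ₁ * jap j₀ ^ μ₂)⁻¹ *
          ∏ n ∈ s.erase j₀, (1 + |(ℓ n : ℝ)| ^ μ₁ * jap n ^ μ₂)⁻¹) := by
          rw [hX]; ring
  -- assemble
  have hm0 : (0 : ℝ) < m := lt_of_lt_of_le one_pos hm1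
  calc 2 * (γ * ∏ n ∈ s, (1 + |(ℓ n : ℝ)| ^ μ₁ * jap n ^ (μ₂ + q))⁻¹) *
        (J ^ q * m⁻¹)
      = (2 * γ / m) * (J ^ q * ∏ n ∈ s, (1 + |(ℓ n : ℝ)| ^ μ₁ * jap n ^ (μ₂ + q))⁻¹) := by
        ring
    _ ≤ (2 * γ / m) * (2 * m * ∏ n ∈ s, (1 + |(ℓ n : ℝ)| ^ μ₁ * jap n ^ μ₂)⁻¹) := by
        refine mul_le_mul_of_nonneg_left hmain (by positivity)
    _ = 4 * γ * ∏ n ∈ s, (1 + |(ℓ n : ℝ)| ^ μ₁ * jap n ^ μ₂)⁻¹ := by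
        have hPpos : (0 : ℝ) < ∏ x ∈ s, (1 + |(ℓ x : ℝ)| ^ μ₁ * jap x ^ μ₂) := by
          refine Finset.prod_pos fun n _ => ?_
          have := mul_nonneg (Real.rpow_nonneg (abs_nonneg ((ℓ n : ℝ))) μ₁)
            (Real.rpow_nonneg (jap_pos n).le μ₂)
          linarith
        field_simp
        ring

set_option maxHeartbeats 1000000 in
/-- Fix `μ₁, μ₂ > 1`. There is a constant `C = C(μ₁,μ₂) > 0` such that
for every `q ≥ 0` and `γ > 0`, the set of `ξ ∈ [−1/2,1/2]^ℤ` admitting a finitely supported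
nonzero `ℓ : ℤ → ℤ` with
`|∑_j (j² + ξ_j ⟨j⟩^{−q}) ℓ_j| ≤ γ ∏_n (1 + |ℓ_n|^{μ₁} ⟨n⟩^{μ₂+q})⁻¹`
has measure at most `C·γ` with respect to the product over `ℤ` of the uniform probability
measures on `[−1/2,1/2]` (characterized here by its finite-dimensional marginals). -/
theorem measure_resonant_frequencies_le
    (μ₁ μ₂ : ℝ) (hμ₁ : 1 < μ₁) (hμ₂ : 1 < μ₂) :
    ∃ C : ℝ, 0 < C ∧
      ∀ (q γ : ℝ), 0 ≤ q → 0 < γ →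
        ∀ μ : Measure (ℤ → ℝ), IsProbabilityMeasure μ →
          (∀ s : Finset ℤ,
            μ.map (fun ξ (i : s) => ξ (i : ℤ)) =
              Measure.pi fun _ : s => volume.restrict (Set.Icc (-(1 / 2) : ℝ) (1 / 2))) →
          μ {ξ : ℤ → ℝ |
              (∀ i : ℤ, ξ i ∈ Set.Icc (-(1 / 2) : ℝ) (1 / 2)) ∧
              ∃ ℓ : ℤ →₀ ℤ, ℓ ≠ 0 ∧
                |∑ j ∈ ℓ.support, (((j : ℝ) ^ 2 + ξ j * jap j ^ (-q)) * (ℓ j : ℝ))| ≤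
                  γ * ∏ n ∈ ℓ.support, (1 + |(ℓ n : ℝ)| ^ μ₁ * jap n ^ (μ₂ + q))⁻¹}
            ≤ ENNReal.ofReal (C * γ) := by
  classical
  set K := Real.exp ((∑' k : ℤ, jap k ^ (-μ₁)) * (∑' n : ℤ, jap n ^ (-μ₂))) with hK
  refine ⟨4 * K, by positivity, ?_⟩
  intro q γ hq hγ μ _ hmarg
  set S : (ℤ →₀ ℤ) → Set (ℤ → ℝ) := fun ℓ => {ξ : ℤ → ℝ |
    |∑ j ∈ ℓ.support, (((j : ℝ) ^ 2 + ξ j * jap j ^ (-q)) * (ℓ j : ℝ))| ≤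
      γ * ∏ n ∈ ℓ.support, (1 + |(ℓ n : ℝ)| ^ μ₁ * jap n ^ (μ₂ + q))⁻¹} with hS
  have hsub : {ξ : ℤ → ℝ |
      (∀ i : ℤ, ξ i ∈ Set.Icc (-(1 / 2) : ℝ) (1 / 2)) ∧
      ∃ ℓ : ℤ →₀ ℤ, ℓ ≠ 0 ∧
        |∑ j ∈ ℓ.support, (((j : ℝ) ^ 2 + ξ j * jap j ^ (-q)) * (ℓ j : ℝ))| ≤
          γ * ∏ n ∈ ℓ.support, (1 + |(ℓ n : ℝ)| ^ μ₁ * jap n ^ (μ₂ + q))⁻¹} ⊆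
      ⋃ ℓ : {ℓ : ℤ →₀ ℤ // ℓ ≠ 0}, S ℓ.val := by
    rintro ξ ⟨-, ℓ, hℓ0, hle⟩
    exact Set.mem_iUnion.2 ⟨⟨ℓ, hℓ0⟩, hle⟩
  set W : (ℤ →₀ ℤ) → ℝ := fun ℓ =>
    ∏ n ∈ ℓ.support, (1 + |(ℓ n : ℝ)| ^ μ₁ * jap n ^ μ₂)⁻¹ with hWdef
  have h1 : ∀ ℓ : {ℓ : ℤ →₀ ℤ // ℓ ≠ 0},
      μ (S ℓ.val) ≤ ENNReal.ofReal (4 * γ) * ENNReal.ofReal (W ℓ.val) := by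
    intro ℓ
    rw [← ENNReal.ofReal_mul (by positivity)]
    exact measure_S_le μ₁ μ₂ q γ hμ₁ hμ₂ hq hγ μ hmarg ℓ.val ℓ.2
  have h2 : ∑' ℓ : {ℓ : ℤ →₀ ℤ // ℓ ≠ 0}, ENNReal.ofReal (W ℓ.val) ≤
      ∑' ℓ : ℤ →₀ ℤ, ENNReal.ofReal (W ℓ) :=
    ENNReal.tsum_comp_le_tsum_of_injective Subtype.val_injective
      (fun ℓ => ENNReal.ofReal (W ℓ))
  have h3 : ∑' ℓ : ℤ →₀ ℤ, ENNReal.ofReal (W ℓ) ≤ ENNReal.ofReal K :=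
    tsum_W_le μ₁ μ₂ hμ₁ hμ₂
  calc μ _ ≤ μ (⋃ ℓ : {ℓ : ℤ →₀ ℤ // ℓ ≠ 0}, S ℓ.val) := measure_mono hsub
    _ ≤ ∑' ℓ : {ℓ : ℤ →₀ ℤ // ℓ ≠ 0}, μ (S ℓ.val) := measure_iUnion_le _
    _ ≤ ∑' ℓ : {ℓ : ℤ →₀ ℤ // ℓ ≠ 0}, ENNReal.ofReal (4 * γ) * ENNReal.ofReal (W ℓ.val) :=
        ENNReal.tsum_le_tsum h1
    _ = ENNReal.ofReal (4 * γ) * ∑' ℓ : {ℓ : ℤ →₀ ℤ // ℓ ≠ 0}, ENNReal.ofReal (W ℓ.val) :=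
        ENNReal.tsum_mul_left
    _ ≤ ENNReal.ofReal (4 * γ) * ENNReal.ofReal K :=
        mul_le_mul_right (le_trans h2 h3) _
    _ = ENNReal.ofReal (4 * K * γ) := by
        rw [← ENNReal.ofReal_mul (by positivity)]
        ring_nf
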